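/- Let (G_n, f_n: G_{n+1} → G_n)_{n≥1} be a tower of groups, let K_n be a subgroup of the center of G_n with f_n(K_{n+1}) ⊆ K_n, and let H_n = G_n/K_n with the induced tower maps, so that 1 → K_n → G_n → H_n → 1 is a central extension for each n, compatibly with the tower maps. Then: (i) lim¹ K_n is an abelian group under coordinatewise multiplication; (ii) the coordinatewise multiplication action of ∏_n K_n on ∏_n G_n descends to a well-defined action of the group lim¹ K_n on the pointed set lim¹ G_n; and (iii) if x, y ∈ lim¹ G_n have the same image in lim¹ H_n, then there exists a ∈ lim¹ K_n with x·a = y. -/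

import Mathlib

universe u
namespace PhantomMaps

/-! ### `lim¹` of a tower of groups -/

/-- The orbit relation on `∏ₙ Gₙ` defining `lim¹`: `a` and `b` are related iff
`b n = c n * a n * (f n (c (n+1)))⁻¹` for some `c`. -/
def Lim1Rel (G : ℕ → Type u) [∀ n, Group (G n)] (f : ∀ n, G (n + 1) →* G n)
    (a b : ∀ n, G n) : Prop :=
  ∃ c : ∀ n, G n, ∀ n, b n = c n * a n * (f n (c (n + 1)))⁻¹

/-- `lim¹` of a tower of groups: the orbit set of the action of `∏ₙ Gₙ` on itself,
pointed by the orbit of the identity. -/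
def Lim1 (G : ℕ → Type u) [∀ n, Group (G n)] (f : ∀ n, G (n + 1) →* G n) : Type u :=
  Quot (Lim1Rel G f)

/-- The basepoint of `lim¹`. -/
def Lim1.pt (G : ℕ → Type u) [∀ n, Group (G n)] (f : ∀ n, G (n + 1) →* G n) : Lim1 G f :=
  Quot.mk _ (fun _ => 1)

end PhantomMaps
namespace PhantomMaps

private lemma lim1rel_refl {A : ℕ → Type u} [∀ n, Group (A n)] (φ : ∀ n, A (n + 1) →* A n)
    (a : ∀ n, A n) : Lim1Rel A φ a a :=
  ⟨fun _ => 1, fun n => by simp⟩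

private lemma lim1rel_trans {A : ℕ → Type u} [∀ n, Group (A n)] (φ : ∀ n, A (n + 1) →* A n)
    {a b c : ∀ n, A n} (h1 : Lim1Rel A φ a b) (h2 : Lim1Rel A φ b c) :
    Lim1Rel A φ a c := by
  obtain ⟨u, hu⟩ := h1
  obtain ⟨v, hv⟩ := h2
  refine ⟨fun n => v n * u n, fun n => ?_⟩
  rw [hv n, hu n, map_mul, mul_inv_rev]
  simp [mul_assoc]

private lemma aux1 {M : Type*} [Group M] (z a w b : M) (h : b * w⁻¹ = w⁻¹ * b) :
    z * a * w⁻¹ * b = z * (a * b) * w⁻¹ := by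
  rw [mul_assoc (z * a), ← h, ← mul_assoc, mul_assoc z]

private lemma aux2 {M : Type*} [Group M] (a z b w : M) (h : a * z = z * a) :
    a * (z * b * w⁻¹) = z * (a * b) * w⁻¹ := by
  rw [← mul_assoc, ← mul_assoc, h, mul_assoc z]

private lemma aux3 {M : Type*} [Group M] (gn xn w y : M)
    (h : w⁻¹ * ((gn * xn * w⁻¹)⁻¹ * y) = ((gn * xn * w⁻¹)⁻¹ * y) * w⁻¹) :
    y = gn * (xn * ((gn * xn * w⁻¹)⁻¹ * y)) * w⁻¹ := by
  rw [← mul_assoc gn xn, mul_assoc (gn * xn), ← h, ← mul_assoc, mul_inv_cancel_left]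


/-- Let `(Gₙ)` be a tower of groups, `Kₙ ≤ Z(Gₙ)` central subgroups with
`fₙ(K_{n+1}) ⊆ Kₙ`, and `Hₙ = Gₙ/Kₙ` the quotient tower (presented by surjections
`qₙ : Gₙ → Hₙ` with kernel `Kₙ`), so that `1 → Kₙ → Gₙ → Hₙ → 1` is a central extension
of towers. Then (i) the coordinatewise multiplication descends to `lim¹ Kₙ` and makes it
an abelian group (commutativity holding already on representatives since `Kₙ` is
central), (ii) coordinatewise multiplication descends to an action of `lim¹ Kₙ` on
`lim¹ Gₙ`, and (iii) two elements of `lim¹ Gₙ` with the same image in `lim¹ Hₙ` differ by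
this action. -/
theorem lim1_central_extension
    (G : ℕ → Type u) [∀ n, Group (G n)] (f : ∀ n, G (n + 1) →* G n)
    (K : ∀ n, Subgroup (G n)) (hK : ∀ n, K n ≤ Subgroup.center (G n))
    (hfK : ∀ n, (K (n + 1)).map (f n) ≤ K n)
    (H : ℕ → Type u) [∀ n, Group (H n)] (fH : ∀ n, H (n + 1) →* H n)
    (q : ∀ n, G n →* H n) (hq : ∀ n, Function.Surjective (q n))
    (hker : ∀ n, (q n).ker = K n)
    (hcomm : ∀ n g, fH n (q (n + 1) g) = q n (f n g)) :
    -- the tower of central subgroups, as a tower of groups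
    letI KG : ℕ → Type u := fun n => ↥(K n)
    letI fK : ∀ n, KG (n + 1) →* KG n := fun n =>
      ((f n).domRestrict (K (n + 1))).codRestrict (K n)
        (fun k => hfK n ⟨k.1, k.2, rfl⟩)
    -- (i) coordinatewise multiplication descends to `lim¹ K` and is commutative there
    ((∀ a a' b b' : ∀ n, KG n, Lim1Rel KG fK a a' → Lim1Rel KG fK b b' →
        Lim1Rel KG fK (a * b) (a' * b')) ∧
      (∀ a b : ∀ n, KG n, a * b = b * a) ∧
      (∃ mul : Lim1 KG fK → Lim1 KG fK → Lim1 KG fK,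
        ∀ a b : ∀ n, KG n, mul (Quot.mk _ a) (Quot.mk _ b) = Quot.mk _ (a * b))) ∧
    -- (ii) the coordinatewise action of `∏ K` on `∏ G` descends to an action of
    -- `lim¹ K` on `lim¹ G`
    (∃ act : Lim1 KG fK → Lim1 G f → Lim1 G f,
      (∀ (k : ∀ n, KG n) (g : ∀ n, G n),
        act (Quot.mk _ k) (Quot.mk _ g) = Quot.mk _ (fun n => g n * (k n : G n))) ∧
      -- (iii) if `x, y ∈ lim¹ G` have the same image in `lim¹ H`,
      -- then `y = x · a` for some `a ∈ lim¹ K`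
      (∀ x y : ∀ n, G n,
        Lim1Rel H fH (fun n => q n (x n)) (fun n => q n (y n)) →
        ∃ a : Lim1 KG fK, act a (Quot.mk _ x) = Quot.mk _ y)) := by
  set KG : ℕ → Type u := fun n => ↥(K n) with hKG
  set fK : ∀ n, KG (n + 1) →* KG n := fun n =>
    ((f n).domRestrict (K (n + 1))).codRestrict (K n)
      (fun k => hfK n ⟨k.1, k.2, rfl⟩) with hfKdef
  have hcen : ∀ (n : ℕ) (k g : G n), k ∈ K n → g * k = k * g := fun n k g hk =>
    Subgroup.mem_center_iff.mp (hK n hk) g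
  have hKcomm : ∀ (n : ℕ) (x y : KG n), x * y = y * x := fun n x y =>
    Subtype.ext (hcen n y.1 x.1 y.2)
  have hmul : ∀ a a' b b' : ∀ n, KG n, Lim1Rel KG fK a a' → Lim1Rel KG fK b b' →
      Lim1Rel KG fK (a * b) (a' * b') := by
    rintro a a' b b' ⟨c, hc⟩ ⟨d, hd⟩
    refine lim1rel_trans fK (b := a' * b) ⟨c, fun n => ?_⟩ ⟨d, fun n => ?_⟩
    · show a' n * b n = c n * (a n * b n) * (fK n (c (n + 1)))⁻¹
      rw [hc n]
      exact aux1 _ _ _ _ (hKcomm n (b n) _)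
    · show a' n * b' n = d n * (a' n * b n) * (fK n (d (n + 1)))⁻¹
      rw [hd n]
      exact aux2 _ _ _ _ (hKcomm n (a' n) (d n))
  have hact1 : ∀ (k : ∀ n, KG n) (g g' : ∀ n, G n), Lim1Rel G f g g' →
      Lim1Rel G f (fun n => g n * (k n : G n)) (fun n => g' n * (k n : G n)) := by
    rintro k g g' ⟨c, hc⟩
    refine ⟨c, fun n => ?_⟩
    show g' n * (k n : G n) = c n * (g n * (k n : G n)) * (f n (c (n + 1)))⁻¹
    rw [hc n]
    exact aux1 _ _ _ _ ((hcen n (k n) ((f n (c (n + 1)))⁻¹) (k n).2).symm)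
  have hact2 : ∀ (k k' : ∀ n, KG n) (g : ∀ n, G n), Lim1Rel KG fK k k' →
      Lim1Rel G f (fun n => g n * (k n : G n)) (fun n => g n * (k' n : G n)) := by
    rintro k k' g ⟨d, hd⟩
    refine ⟨fun n => (d n : G n), fun n => ?_⟩
    show g n * (k' n : G n) =
      (d n : G n) * (g n * (k n : G n)) * (f n (d (n + 1) : G (n + 1)))⁻¹
    have hco : (k' n : G n) =
        (d n : G n) * (k n : G n) * (f n (d (n + 1) : G (n + 1)))⁻¹ := by
      rw [hd n]; rfl
    rw [hco]
    exact aux2 _ _ _ _ (hcen n (d n) (g n) (d n).2)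
  refine ⟨⟨hmul, fun a b => funext fun n => hKcomm n (a n) (b n),
      ⟨Quot.map₂ (· * ·) (fun a b b' hb => hmul a a b b' (lim1rel_refl fK a) hb)
        (fun a a' b ha => hmul a a' b b ha (lim1rel_refl fK b)), fun a b => rfl⟩⟩,
    Quot.map₂ (fun k g => fun n => g n * (k n : G n)) hact1 hact2, fun k g => rfl, ?_⟩
  rintro x y ⟨c, hc⟩
  choose g hg using fun n => hq n (c n)
  have hmem : ∀ n, (g n * x n * (f n (g (n + 1)))⁻¹)⁻¹ * y n ∈ K n := by
    intro n
    rw [← hker n, MonoidHom.mem_ker]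
    have h1 : q n (f n (g (n + 1))) = fH n (c (n + 1)) := by
      rw [← hcomm n (g (n + 1)), hg (n + 1)]
    simp only [map_mul, map_inv, h1, hg]
    rw [← hc n, inv_mul_cancel]
  refine ⟨Quot.mk _ (fun n => ⟨(g n * x n * (f n (g (n + 1)))⁻¹)⁻¹ * y n, hmem n⟩), ?_⟩
  exact Quot.sound ⟨g, fun n =>
    aux3 _ _ _ _ (hcen n _ ((f n (g (n + 1)))⁻¹) (hmem n))⟩


end PhantomMaps
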